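/- In the Benes network B(r) (r ≥ 3), every vertex on level 0, level r, or level 2r is a twin vertex; hence β'(B(r)) ≥ 3·2^r. -/

import Mathlib

open SimpleGraph

variable {V : Type*}

/-- `S` is a resolving set of `G`. -/
def ResSet (G : SimpleGraph V) (S : Set V) : Prop :=
  ∀ x y : V, x ≠ y → ∃ w ∈ S, G.dist x w ≠ G.dist y w

/-- `S` is a fault-tolerant resolving set of `G`. -/
def FTResSet (G : SimpleGraph V) (S : Set V) : Prop :=
  ResSet G S ∧ ∀ x ∈ S, ResSet G (S \ {x})

/-- Metric dimension. -/
noncomputable def md (G : SimpleGraph V) : ℕ :=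
  sInf {n | ∃ S : Set V, S.ncard = n ∧ ResSet G S}

/-- Fault-tolerant metric dimension. -/
noncomputable def ftmd (G : SimpleGraph V) : ℕ :=
  sInf {n | ∃ S : Set V, S.ncard = n ∧ FTResSet G S}

/-- `u` and `v` are twins: distinct and with equal open or equal closed neighborhoods. -/
def IsTwinPair (G : SimpleGraph V) (u v : V) : Prop :=
  u ≠ v ∧ (G.neighborSet u = G.neighborSet v ∨
    G.neighborSet u ∪ {u} = G.neighborSet v ∪ {v})

/-- `u` is a twin vertex. -/
def IsTwin (G : SimpleGraph V) (u : V) : Prop := ∃ v, IsTwinPair G u v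

/-- Adjacency in the Benes network `B(r)`: `(s,j) ~ (s',j+1)` iff `s = s'` or they differ
exactly in bit `j+1` (when `j ≤ r-1`) resp. bit `2r-j` (when `j ≥ r`); bit `b` is index `b-1`. -/
def BenesAdj (r : ℕ) (u v : (Fin r → Bool) × Fin (2 * r + 1)) : Prop :=
  ∃ j : ℕ, ((u.2.val = j ∧ v.2.val = j + 1) ∨ (v.2.val = j ∧ u.2.val = j + 1)) ∧
    (u.1 = v.1 ∨ ∃ k : Fin r, k.val + 1 = (if j < r then j + 1 else 2 * r - j) ∧
      u.1 k ≠ v.1 k ∧ ∀ i : Fin r, i ≠ k → u.1 i = v.1 i)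

/-- The `r`-dimensional Benes network `B(r)`. -/
def Benes (r : ℕ) : SimpleGraph ((Fin r → Bool) × Fin (2 * r + 1)) where
  Adj u v := BenesAdj r u v
  symm := by
    constructor
    rintro u v ⟨j, h1, h2⟩
    refine ⟨j, h1.symm, ?_⟩
    rcases h2 with h | ⟨k, hk, hne, hall⟩
    · exact Or.inl h.symm
    · exact Or.inr ⟨k, hk, hne.symm, fun i hi => (hall i hi).symm⟩
  loopless := by
    constructor
    rintro u ⟨j, h1 | h1, -⟩ <;> omega


section AuxLemmas

lemma IsTwinPair.symm' {G : SimpleGraph V} {u v : V} (h : IsTwinPair G u v) :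
    IsTwinPair G v u := ⟨h.1.symm, h.2.imp Eq.symm Eq.symm⟩

lemma twin_reachable {G : SimpleGraph V} {u v : V}
    (hdeg : ∀ x : V, ∃ a, G.Adj x a) (h : IsTwinPair G u v) : G.Reachable u v := by
  obtain ⟨a, ha⟩ := hdeg u
  have hmem : a ∈ G.neighborSet u := ha
  rcases h.2 with he | he
  · rw [he] at hmem
    exact ha.reachable.trans (Reachable.symm (Adj.reachable hmem))
  · have hmem' : a ∈ G.neighborSet u ∪ {u} := Or.inl hmem
    rw [he] at hmem'
    rcases hmem' with hav | hav
    · exact ha.reachable.trans (Reachable.symm (Adj.reachable hav))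
    · rw [Set.mem_singleton_iff] at hav
      subst hav; exact ha.reachable

lemma twin_dist_le {G : SimpleGraph V} {u v : V} (h : IsTwinPair G u v)
    (hruv : G.Reachable u v) (w : V) (hwu : w ≠ u) :
    G.dist v w ≤ G.dist u w := by
  by_cases hreach : G.Reachable u w
  · obtain ⟨p, hp⟩ := hreach.exists_walk_length_eq_dist
    cases p with
    | nil => exact absurd rfl hwu.symm
    | @cons _ x _ ha q =>
      have hmem : x ∈ G.neighborSet u := ha
      rcases h.2 with he | he
      · rw [he] at hmem
        calc G.dist v w ≤ (SimpleGraph.Walk.cons hmem q).length := dist_le _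
          _ = G.dist u w := by show q.length + 1 = _; simpa using hp
      · have hmem' : x ∈ G.neighborSet u ∪ {u} := Or.inl hmem
        rw [he] at hmem'
        rcases hmem' with hvx | hxv
        · calc G.dist v w ≤ (SimpleGraph.Walk.cons hvx q).length := dist_le _
            _ = G.dist u w := by show q.length + 1 = _; simpa using hp
        · rw [Set.mem_singleton_iff] at hxv
          subst hxv
          have := dist_le q
          simp only [SimpleGraph.Walk.length_cons] at hp
          omega
  · have : ¬ G.Reachable v w := fun hvw => hreach (hruv.trans hvw)
    rw [dist_eq_zero_of_not_reachable this]
    exact Nat.zero_le _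

lemma twin_dist {G : SimpleGraph V} {u v : V} (hdeg : ∀ x : V, ∃ a, G.Adj x a)
    (h : IsTwinPair G u v) (w : V) (hwu : w ≠ u) (hwv : w ≠ v) :
    G.dist u w = G.dist v w :=
  le_antisymm (twin_dist_le h.symm' (twin_reachable hdeg h).symm w hwv)
    (twin_dist_le h (twin_reachable hdeg h) w hwu)

lemma twin_mem {G : SimpleGraph V} {u v : V} (hdeg : ∀ x : V, ∃ a, G.Adj x a)
    (h : IsTwinPair G u v) {S : Set V} (hS : FTResSet G S) : u ∈ S := by
  by_contra hu
  by_cases hv : v ∈ S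
  · obtain ⟨w, hw, hd⟩ := hS.2 v hv u v h.1
    have hwu : w ≠ u := fun e => hu (e ▸ hw.1)
    have hwv : w ≠ v := fun e => hw.2 (by simp [e])
    exact hd (twin_dist hdeg h w hwu hwv)
  · obtain ⟨w, hw, hd⟩ := hS.1 u v h.1
    exact hd (twin_dist hdeg h w (fun e => hu (e ▸ hw)) (fun e => hv (e ▸ hw)))

lemma resSet_compl {G : SimpleGraph V}
    (hdeg2 : ∀ x : V, ∃ a b, a ≠ b ∧ G.Adj x a ∧ G.Adj x b) (z : V) :
    ResSet G ({z}ᶜ) := by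
  intro x y hxy
  by_cases hreach : G.Reachable x y
  · by_cases hxz : x = z
    · have hyz : y ∈ ({z}ᶜ : Set V) := by
        simp only [Set.mem_compl_iff, Set.mem_singleton_iff]
        exact fun e => hxy (hxz.trans e.symm)
      refine ⟨y, hyz, ?_⟩
      have h1 : 0 < G.dist x y := hreach.pos_dist_of_ne hxy
      rw [SimpleGraph.dist_self]; omega
    · refine ⟨x, by simp [hxz], ?_⟩
      have h1 : 0 < G.dist y x := hreach.symm.pos_dist_of_ne hxy.symm
      rw [SimpleGraph.dist_self]; omega
  · obtain ⟨a, b, hab, ha, hb⟩ := hdeg2 x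
    obtain ⟨w, hwz, hadj⟩ : ∃ w, w ≠ z ∧ G.Adj x w := by
      by_cases haz : a = z
      · exact ⟨b, fun e => hab (haz.trans e.symm), hb⟩
      · exact ⟨a, haz, ha⟩
    have h1 : G.dist x w = 1 := dist_eq_one_iff_adj.mpr hadj
    have h2 : G.dist y w = 0 :=
      dist_eq_zero_of_not_reachable (fun hyw => hreach ((hyw.trans hadj.reachable.symm).symm))
    exact ⟨w, by simpa using hwz, by omega⟩

lemma ftres_univ {G : SimpleGraph V}
    (hdeg2 : ∀ x : V, ∃ a b, a ≠ b ∧ G.Adj x a ∧ G.Adj x b) :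
    FTResSet G (Set.univ) := by
  constructor
  · intro x y hxy
    obtain ⟨w, _, hd⟩ := resSet_compl hdeg2 y x y hxy
    exact ⟨w, trivial, hd⟩
  · intro x _
    have h : Set.univ \ {x} = ({x}ᶜ : Set V) := by ext; simp
    rw [h]; exact resSet_compl hdeg2 x

end AuxLemmas

lemma flip_ne {r : ℕ} (s : Fin r → Bool) (k : Fin r) :
    Function.update s k (!s k) ≠ s := fun h => by
  have := congrFun h k; simp at this

lemma benes_adj_flip {r : ℕ} (hr : 3 ≤ r) (k : Fin r) (s : Fin r → Bool)
    (j0 : Fin (2 * r + 1))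
    (hcase : ((j0.val = 0 ∨ j0.val = 2 * r) ∧ k.val = 0) ∨ (j0.val = r ∧ k.val = r - 1))
    (v : (Fin r → Bool) × Fin (2 * r + 1)) (h : (Benes r).Adj (s, j0) v) :
    (Benes r).Adj (Function.update s k (!s k), j0) v := by
  obtain ⟨j, hj, hs⟩ := h
  have hvlt : v.2.val < 2 * r + 1 := v.2.isLt
  have hj' : (j0.val = j ∧ v.2.val = j + 1) ∨ (v.2.val = j ∧ j0.val = j + 1) := hj
  have hbit : (if j < r then j + 1 else 2 * r - j) = k.val + 1 := by
    rcases hj' with ⟨h1, h2⟩ | ⟨h1, h2⟩ <;> rcases hcase with ⟨hj0 | hj0, hk⟩ | ⟨hj0, hk⟩ <;>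
      split_ifs <;> omega
  refine ⟨j, hj, ?_⟩
  rcases hs with h | ⟨k', hk', hne, hall⟩
  · refine Or.inr ⟨k, hbit.symm, ?_, fun i hi => ?_⟩
    · show Function.update s k (!s k) k ≠ v.1 k
      have hv : v.1 k = s k := (congrFun h k).symm
      rw [Function.update_self, hv]
      cases s k <;> simp
    · show Function.update s k (!s k) i = v.1 i
      rw [Function.update_of_ne hi]
      exact congrFun h i
  · rw [hbit] at hk'
    have hkk : k' = k := Fin.ext (by omega)
    subst hkk
    refine Or.inl (funext fun i => ?_)
    show Function.update s k' (!s k') i = v.1 i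
    by_cases hi : i = k'
    · subst hi
      rw [Function.update_self]
      have hne' : s i ≠ v.1 i := hne
      cases hsv : v.1 i <;> cases hss : s i <;> simp_all
    · rw [Function.update_of_ne hi]
      exact hall i hi

lemma benes_ns_flip {r : ℕ} (hr : 3 ≤ r) (k : Fin r) (s : Fin r → Bool)
    (j0 : Fin (2 * r + 1))
    (hcase : ((j0.val = 0 ∨ j0.val = 2 * r) ∧ k.val = 0) ∨ (j0.val = r ∧ k.val = r - 1)) :
    (Benes r).neighborSet (s, j0) = (Benes r).neighborSet (Function.update s k (!s k), j0) := by
  have heq : Function.update (Function.update s k (!s k)) k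
      (!(Function.update s k (!s k) k)) = s := by
    funext i
    by_cases hi : i = k
    · subst hi; simp
    · rw [Function.update_of_ne hi, Function.update_of_ne hi]
  ext v
  simp only [mem_neighborSet]
  constructor
  · exact benes_adj_flip hr k s j0 hcase v
  · intro h
    have := benes_adj_flip hr k (Function.update s k (!s k)) j0 hcase v h
    rwa [heq] at this

lemma benes_twin_pair {r : ℕ} (hr : 3 ≤ r) (k : Fin r) (s : Fin r → Bool)
    (j0 : Fin (2 * r + 1))
    (hcase : ((j0.val = 0 ∨ j0.val = 2 * r) ∧ k.val = 0) ∨ (j0.val = r ∧ k.val = r - 1)) :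
    IsTwinPair (Benes r) (s, j0) (Function.update s k (!s k), j0) :=
  ⟨fun h => flip_ne s k (congrArg Prod.fst h).symm, Or.inl (benes_ns_flip hr k s j0 hcase)⟩

lemma benes_two_nbrs {r : ℕ} (hr : 3 ≤ r) (v : (Fin r → Bool) × Fin (2 * r + 1)) :
    ∃ a b, a ≠ b ∧ (Benes r).Adj v a ∧ (Benes r).Adj v b := by
  obtain ⟨s, j0⟩ := v
  by_cases hlt : j0.val < 2 * r
  · have hm1 : 1 ≤ (if j0.val < r then j0.val + 1 else 2 * r - j0.val) ∧
        (if j0.val < r then j0.val + 1 else 2 * r - j0.val) ≤ r := by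
      split_ifs <;> omega
    set m := if j0.val < r then j0.val + 1 else 2 * r - j0.val with hm
    set k : Fin r := ⟨m - 1, by omega⟩ with hk
    refine ⟨(s, ⟨j0.val + 1, by omega⟩), (Function.update s k (!s k), ⟨j0.val + 1, by omega⟩),
      ?_, ?_, ?_⟩
    · intro h
      exact flip_ne s k (congrArg Prod.fst h).symm
    · exact ⟨j0.val, Or.inl ⟨rfl, rfl⟩, Or.inl rfl⟩
    · refine ⟨j0.val, Or.inl ⟨rfl, rfl⟩, Or.inr ⟨k, ?_, ?_, fun i hi => ?_⟩⟩
      · show m - 1 + 1 = _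
        rw [← hm]; omega
      · show s k ≠ Function.update s k (!s k) k
        rw [Function.update_self]
        cases s k <;> simp
      · show s i = Function.update s k (!s k) i
        rw [Function.update_of_ne hi]
  · have hj0 : j0.val = 2 * r := by have := j0.isLt; omega
    set k : Fin r := ⟨0, by omega⟩ with hk
    refine ⟨(s, ⟨2 * r - 1, by omega⟩), (Function.update s k (!s k), ⟨2 * r - 1, by omega⟩),
      ?_, ?_, ?_⟩
    · intro h
      exact flip_ne s k (congrArg Prod.fst h).symm
    · exact ⟨2 * r - 1, Or.inr ⟨rfl, by show j0.val = 2 * r - 1 + 1; omega⟩, Or.inl rfl⟩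
    · refine ⟨2 * r - 1, Or.inr ⟨rfl, by show j0.val = 2 * r - 1 + 1; omega⟩,
        Or.inr ⟨k, ?_, ?_, fun i hi => ?_⟩⟩
      · show 0 + 1 = _
        rw [if_neg (by omega)]; omega
      · show s k ≠ Function.update s k (!s k) k
        rw [Function.update_self]
        cases s k <;> simp
      · show s i = Function.update s k (!s k) i
        rw [Function.update_of_ne hi]

lemma benes_card_lb {r : ℕ} (hr : 3 ≤ r) :
    3 * 2 ^ r ≤ ({v : (Fin r → Bool) × Fin (2 * r + 1) |
      v.2.val = 0 ∨ v.2.val = r ∨ v.2.val = 2 * r}).ncard := by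
  classical
  set T : Set ((Fin r → Bool) × Fin (2 * r + 1)) :=
    {v | v.2.val = 0 ∨ v.2.val = r ∨ v.2.val = 2 * r} with hT
  have hcard : (Set.univ : Set ((Fin r → Bool) × Fin 3)).ncard = 3 * 2 ^ r := by
    rw [Set.ncard_univ, Nat.card_eq_fintype_card]
    simp [Fintype.card_fun]
    ring
  let f : (Fin r → Bool) × Fin 3 → (Fin r → Bool) × Fin (2 * r + 1) :=
    fun p => (p.1, ⟨if p.2.val = 0 then 0 else if p.2.val = 1 then r else 2 * r, by
      split_ifs <;> omega⟩)
  have hmaps : ∀ p ∈ (Set.univ : Set ((Fin r → Bool) × Fin 3)), f p ∈ T := by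
    intro p _
    simp only [hT, Set.mem_setOf_eq, f]
    split_ifs <;> simp
  have hinj : Set.InjOn f Set.univ := by
    intro p _ q _ h
    have h1 : p.1 = q.1 := congrArg (fun x => x.1) h
    have h2 : (if p.2.val = 0 then 0 else if p.2.val = 1 then r else 2 * r) =
        (if q.2.val = 0 then 0 else if q.2.val = 1 then r else 2 * r) :=
      congrArg (fun x => (Prod.snd x).val) h
    have hp := p.2.isLt
    have hq := q.2.isLt
    have h3 : p.2 = q.2 := Fin.ext (by split_ifs at h2 <;> omega)
    exact Prod.ext h1 h3
  calc 3 * 2 ^ r = (Set.univ : Set ((Fin r → Bool) × Fin 3)).ncard := hcard.symm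
    _ ≤ T.ncard := Set.ncard_le_ncard_of_injOn f hmaps hinj (Set.toFinite T)

theorem benes_twins_and_lower_bound (r : ℕ) (hr : 3 ≤ r) :
    (∀ v : (Fin r → Bool) × Fin (2 * r + 1),
      (v.2.val = 0 ∨ v.2.val = r ∨ v.2.val = 2 * r) → IsTwin (Benes r) v) ∧
    3 * 2 ^ r ≤ ftmd (Benes r) := by
  have htwin : ∀ v : (Fin r → Bool) × Fin (2 * r + 1),
      (v.2.val = 0 ∨ v.2.val = r ∨ v.2.val = 2 * r) →
      ∃ v', IsTwinPair (Benes r) v v' := by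
    rintro ⟨s, j0⟩ hv
    rcases hv with h | h | h
    · exact ⟨_, benes_twin_pair hr ⟨0, by omega⟩ s j0 (Or.inl ⟨Or.inl h, rfl⟩)⟩
    · exact ⟨_, benes_twin_pair hr ⟨r - 1, by omega⟩ s j0 (Or.inr ⟨h, rfl⟩)⟩
    · exact ⟨_, benes_twin_pair hr ⟨0, by omega⟩ s j0 (Or.inl ⟨Or.inr h, rfl⟩)⟩
  refine ⟨htwin, ?_⟩
  have hdeg2 := benes_two_nbrs hr
  have hdeg : ∀ x, ∃ a, (Benes r).Adj x a := by
    intro x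
    obtain ⟨a, _, _, ha, _⟩ := hdeg2 x
    exact ⟨a, ha⟩
  apply le_csInf
  · exact ⟨(Set.univ : Set ((Fin r → Bool) × Fin (2 * r + 1))).ncard, Set.univ, rfl,
      ftres_univ hdeg2⟩
  · rintro n ⟨S, hcard, hFT⟩
    have hsub : {v : (Fin r → Bool) × Fin (2 * r + 1) |
        v.2.val = 0 ∨ v.2.val = r ∨ v.2.val = 2 * r} ⊆ S := by
      intro v hv
      obtain ⟨v', hp⟩ := htwin v hv
      exact twin_mem hdeg hp hFT
    calc 3 * 2 ^ r ≤ _ := benes_card_lb hr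
      _ ≤ S.ncard := Set.ncard_le_ncard hsub (Set.toFinite S)
      _ = n := hcard
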